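/- If 1 ≤ n ≤ 3 and m > n, then sg(K_{n,m}) = m. -/

import Mathlib

/-- A selection of fixed geodesics between pairs of vertices of `S`:
each element of `P` is a walk whose endpoints lie in `S`, which is a shortest path,
with at most one walk per ordered pair of endpoints, and with the walks chosen for
the two orderings of a pair being reverses of each other. -/
def IsGeodesicSelection {V : Type*} (G : SimpleGraph V) (S : Set V)
    (P : Set ((u : V) × (v : V) × G.Walk u v)) : Prop :=
  (∀ q ∈ P, q.1 ∈ S ∧ q.2.1 ∈ S ∧ q.2.2.IsPath ∧ q.2.2.length = G.dist q.1 q.2.1) ∧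
  (∀ q ∈ P, ∀ q' ∈ P,
    (q.1 = q'.1 ∧ q.2.1 = q'.2.1 → q = q') ∧
    (q.1 = q'.2.1 ∧ q.2.1 = q'.1 → q.2.2.support = q'.2.2.support.reverse))

/-- `S` is a strong geodetic set of `G` if one can fix one shortest path between
each pair of vertices of `S` so that all vertices of `G` are covered. -/
def IsStrongGeodeticSet {V : Type*} (G : SimpleGraph V) (S : Set V) : Prop :=
  ∃ P, IsGeodesicSelection G S P ∧ ∀ w : V, ∃ q ∈ P, w ∈ q.2.2.support

/-- The strong geodetic number: minimum size of a strong geodetic set. -/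
noncomputable def strongGeodeticNumber {V : Type*} (G : SimpleGraph V) : ℕ :=
  sInf {k | ∃ S : Set V, S.ncard = k ∧ IsStrongGeodeticSet G S}

open SimpleGraph

private lemma dist_rr (n m : ℕ) (hn : 1 ≤ n) {i j : Fin m} (hij : i ≠ j) :
    (completeBipartiteGraph (Fin n) (Fin m)).dist (Sum.inr i) (Sum.inr j) = 2 := by
  set G := completeBipartiteGraph (Fin n) (Fin m) with hG
  let w : G.Walk (Sum.inr i) (Sum.inr j) :=
    Walk.cons (v := Sum.inl ⟨0, hn⟩) (by simp [hG]) (Walk.cons (by simp [hG]) Walk.nil)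
  have h2 : G.dist (Sum.inr i) (Sum.inr j) ≤ 2 := by
    have := SimpleGraph.dist_le w
    simpa [w] using this
  have h0 : G.dist (Sum.inr i) (Sum.inr j) ≠ 0 := by
    intro h
    rcases SimpleGraph.dist_eq_zero_iff_eq_or_not_reachable.mp h with h | h
    · exact hij (by simpa using h)
    · exact h ⟨w⟩
  have h1 : G.dist (Sum.inr i) (Sum.inr j) ≠ 1 := by
    intro h
    have := SimpleGraph.dist_eq_one_iff_adj.mp h
    simp [hG] at this
  omega

private lemma walk_struct {V : Type*} {G : SimpleGraph V} {u v : V} (p : G.Walk u v)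
    (hl : p.length ≤ 2) {w : V} (hw : w ∈ p.support)
    (hwu : w ≠ u) (hwv : w ≠ v) :
    G.Adj u w ∧ G.Adj w v ∧ p.support = [u, w, v] := by
  match p with
  | Walk.nil =>
      simp at hw; exact absurd hw hwu
  | Walk.cons h Walk.nil =>
      simp [Walk.support_cons] at hw
      rcases hw with h1 | h1
      · exact absurd h1 hwu
      · exact absurd h1 hwv
  | Walk.cons (v := x) h (Walk.cons h' Walk.nil) =>
      simp [Walk.support_cons] at hw
      rcases hw with h1 | h1 | h1
      · exact absurd h1 hwu
      · subst h1; exact ⟨h, h', by simp [Walk.support_cons]⟩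
      · exact absurd h1 hwv
  | Walk.cons h (Walk.cons h' (Walk.cons h'' q)) =>
      simp [Walk.length_cons] at hl

private lemma dist_le_two (n m : ℕ) (hn : 1 ≤ n) (hm : 1 ≤ m)
    (u v : Fin n ⊕ Fin m) :
    (completeBipartiteGraph (Fin n) (Fin m)).dist u v ≤ 2 := by
  set G := completeBipartiteGraph (Fin n) (Fin m) with hG
  rcases u with k | j <;> rcases v with k' | j'
  · let w : G.Walk (Sum.inl k) (Sum.inl k') :=
      Walk.cons (v := Sum.inr ⟨0, hm⟩) (by simp [hG]) (Walk.cons (by simp [hG]) Walk.nil)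
    have := SimpleGraph.dist_le w
    simpa [w] using this
  · let w : G.Walk (Sum.inl k) (Sum.inr j') :=
      Walk.cons (by simp [hG]) Walk.nil
    have := SimpleGraph.dist_le w
    simp [w] at this
    omega
  · let w : G.Walk (Sum.inr j) (Sum.inl k') :=
      Walk.cons (by simp [hG]) Walk.nil
    have := SimpleGraph.dist_le w
    simp [w] at this
    omega
  · let w : G.Walk (Sum.inr j) (Sum.inr j') :=
      Walk.cons (v := Sum.inl ⟨0, hn⟩) (by simp [hG]) (Walk.cons (by simp [hG]) Walk.nil)
    have := SimpleGraph.dist_le w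
    simpa [w] using this

private def mid (n : ℕ) (hn : 1 ≤ n) (j : ℕ) : Fin n :=
  if h : j ≤ n ∧ 1 ≤ j then ⟨j - 1, by omega⟩ else ⟨0, hn⟩

private def wk (n m : ℕ) (hn : 1 ≤ n) (hm : 1 ≤ m) (j : Fin m) :
    (completeBipartiteGraph (Fin n) (Fin m)).Walk (Sum.inr ⟨0, hm⟩) (Sum.inr j) :=
  Walk.cons (v := Sum.inl (mid n hn j.val)) (by simp) (Walk.cons (by simp) Walk.nil)

private lemma strong_upper (n m : ℕ) (hn : 1 ≤ n) (hm : n < m) :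
    IsStrongGeodeticSet (completeBipartiteGraph (Fin n) (Fin m))
      (Set.range Sum.inr) := by
  have hm1 : 1 ≤ m := by omega
  set G := completeBipartiteGraph (Fin n) (Fin m) with hG
  refine ⟨{q | ∃ j : Fin m, j.val ≠ 0 ∧
      q = ⟨Sum.inr ⟨0, hm1⟩, Sum.inr j, wk n m hn hm1 j⟩}, ⟨?_, ?_⟩, ?_⟩
  · rintro q ⟨j, hj, rfl⟩
    refine ⟨⟨_, rfl⟩, ⟨_, rfl⟩, ?_, ?_⟩
    · rw [Walk.isPath_def]
      simp [wk, Fin.ext_iff]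
      omega
    · have : (⟨0, hm1⟩ : Fin m) ≠ j := by
        intro h; exact hj (by rw [← h])
      rw [dist_rr n m hn this]
      simp [wk]
  · rintro q ⟨j, hj, rfl⟩ q' ⟨j', hj', rfl⟩
    constructor
    · rintro ⟨-, h2⟩
      simp only [Sum.inr.injEq] at h2
      subst h2
      rfl
    · rintro ⟨h1, -⟩
      simp only [Sum.inr.injEq, Fin.ext_iff] at h1
      omega
  · intro w
    rcases w with k | j
    · refine ⟨⟨Sum.inr ⟨0, hm1⟩, Sum.inr ⟨k.val + 1, by omega⟩,
        wk n m hn hm1 ⟨k.val + 1, by omega⟩⟩, ⟨⟨k.val + 1, by omega⟩, by simp, rfl⟩, ?_⟩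
      have hmid : mid n hn (k.val + 1) = k := by
        have hk := k.isLt
        rw [mid, dif_pos (by omega)]
        simp
      simp [wk, hmid]
    · by_cases hj : j.val = 0
      · refine ⟨⟨Sum.inr ⟨0, hm1⟩, Sum.inr ⟨1, by omega⟩,
          wk n m hn hm1 ⟨1, by omega⟩⟩, ⟨⟨1, by omega⟩, by simp, rfl⟩, ?_⟩
        have : j = ⟨0, hm1⟩ := by simp [Fin.ext_iff, hj]
        subst this
        simp [wk]
      · exact ⟨⟨Sum.inr ⟨0, hm1⟩, Sum.inr j, wk n m hn hm1 j⟩, ⟨j, hj, rfl⟩,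
          by simp [wk]⟩

private def Good (n m : ℕ) (S : Set (Fin n ⊕ Fin m))
    (P : Set ((u : Fin n ⊕ Fin m) × (v : Fin n ⊕ Fin m) ×
      (completeBipartiteGraph (Fin n) (Fin m)).Walk u v))
    (j : Fin m) (p : Fin n × Fin n) : Prop :=
  p.1 < p.2 ∧ (Sum.inl p.1 : Fin n ⊕ Fin m) ∈ S ∧ (Sum.inl p.2 : Fin n ⊕ Fin m) ∈ S ∧
  ∃ q ∈ P,
    (q.1 = Sum.inl p.1 ∧ q.2.1 = Sum.inl p.2 ∧
      q.2.2.support = [Sum.inl p.1, Sum.inr j, Sum.inl p.2]) ∨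
    (q.1 = Sum.inl p.2 ∧ q.2.1 = Sum.inl p.1 ∧
      q.2.2.support = [Sum.inl p.2, Sum.inr j, Sum.inl p.1])

private lemma good_inj {n m : ℕ} {S : Set (Fin n ⊕ Fin m)}
    {P : Set ((u : Fin n ⊕ Fin m) × (v : Fin n ⊕ Fin m) ×
      (completeBipartiteGraph (Fin n) (Fin m)).Walk u v)}
    (hP2 : ∀ q ∈ P, ∀ q' ∈ P,
      (q.1 = q'.1 ∧ q.2.1 = q'.2.1 → q = q') ∧
      (q.1 = q'.2.1 ∧ q.2.1 = q'.1 → q.2.2.support = q'.2.2.support.reverse))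
    {j j' : Fin m} {p : Fin n × Fin n}
    (h : Good n m S P j p) (h' : Good n m S P j' p) : j = j' := by
  obtain ⟨-, -, -, q, hqP, hq⟩ := h
  obtain ⟨-, -, -, q', hq'P, hq'⟩ := h'
  rcases hq with ⟨ha1, ha2, ha3⟩ | ⟨ha1, ha2, ha3⟩ <;>
    rcases hq' with ⟨hb1, hb2, hb3⟩ | ⟨hb1, hb2, hb3⟩
  · have hqq : q = q' := (hP2 q hqP q' hq'P).1 ⟨by rw [ha1, hb1], by rw [ha2, hb2]⟩
    subst hqq
    have := ha3.symm.trans hb3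
    simpa using this
  · have := (hP2 q hqP q' hq'P).2 ⟨by rw [ha1, hb2], by rw [ha2, hb1]⟩
    rw [ha3, hb3] at this
    simpa using this
  · have := (hP2 q hqP q' hq'P).2 ⟨by rw [ha1, hb2], by rw [ha2, hb1]⟩
    rw [ha3, hb3] at this
    simpa using this
  · have hqq : q = q' := (hP2 q hqP q' hq'P).1 ⟨by rw [ha1, hb1], by rw [ha2, hb2]⟩
    subst hqq
    have := ha3.symm.trans hb3
    simpa using this

private lemma strong_lower (n m : ℕ) (hn1 : 1 ≤ n) (hn3 : n ≤ 3) (hm : n < m)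
    (S : Set (Fin n ⊕ Fin m))
    (hS : IsStrongGeodeticSet (completeBipartiteGraph (Fin n) (Fin m)) S) :
    m ≤ S.ncard := by
  classical
  obtain ⟨P, ⟨hP1, hP2⟩, hcov⟩ := hS
  have hm1 : 1 ≤ m := by omega
  set AF : Finset (Fin n) := Finset.univ.filter (fun k => Sum.inl k ∈ S) with hAF
  set BF : Finset (Fin m) := Finset.univ.filter (fun j => Sum.inr j ∈ S) with hBF
  set TF : Finset (Fin m) := Finset.univ.filter (fun j => ¬ Sum.inr j ∈ S) with hTF
  set DF : Finset (Fin n × Fin n) := AF.offDiag.filter (fun p => p.1 < p.2) with hDF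
  have hSeq : S = (Sum.inl '' {k | k ∈ AF}) ∪ (Sum.inr '' {j | j ∈ BF}) := by
    ext x
    rcases x with k | j <;> simp [hAF, hBF]
  have hScard : S.ncard = AF.card + BF.card := by
    rw [hSeq, Set.ncard_union_eq ?_ (Set.toFinite _) (Set.toFinite _)]
    · rw [Set.ncard_image_of_injective _ Sum.inl_injective,
        Set.ncard_image_of_injective _ Sum.inr_injective]
      simp [Set.ncard_coe_finset]
    · rw [Set.disjoint_left]
      rintro x ⟨k, -, rfl⟩ ⟨j, -, h⟩
      simp at h
  have hTB : BF.card + TF.card = m := by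
    have := Finset.card_filter_add_card_filter_not
      (s := (Finset.univ : Finset (Fin m))) (p := fun j : Fin m => Sum.inr j ∈ S)
    simpa [hBF, hTF] using this
  have hA : AF.card ≤ n := le_trans (Finset.card_filter_le _ _) (by simp)
  have hD2 : DF.card + DF.card = AF.card * AF.card - AF.card := by
    have hsplit := Finset.card_filter_add_card_filter_not
      (s := AF.offDiag) (p := fun p : Fin n × Fin n => p.1 < p.2)
    have hswap : (AF.offDiag.filter (fun p : Fin n × Fin n => ¬ p.1 < p.2)).card
        = (AF.offDiag.filter (fun p : Fin n × Fin n => p.1 < p.2)).card := by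
      apply Finset.card_bij (fun p _ => Prod.swap p)
      · intro p hp
        simp only [Finset.mem_filter, Finset.mem_offDiag] at hp ⊢
        obtain ⟨⟨h1, h2, h3⟩, h4⟩ := hp
        exact ⟨⟨h2, h1, Ne.symm h3⟩, lt_of_le_of_ne (not_lt.mp h4) (Ne.symm h3)⟩
      · intro p hp p' hp' hs
        exact Prod.swap_injective hs
      · intro p hp
        simp only [Finset.mem_filter, Finset.mem_offDiag] at hp
        obtain ⟨⟨h1, h2, h3⟩, h4⟩ := hp
        exact ⟨p.swap, by
          simp only [Finset.mem_filter, Finset.mem_offDiag, Prod.fst_swap, Prod.snd_swap]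
          exact ⟨⟨h2, h1, Ne.symm h3⟩, not_lt.mpr (le_of_lt h4)⟩, by simp⟩
    rw [Finset.offDiag_card] at hsplit
    rw [← hDF] at hsplit hswap
    omega
  have hkey : TF.card ≤ DF.card := by
    have exG : ∀ j : Fin m, ∃ p : Fin n × Fin n, j ∈ TF → Good n m S P j p := by
      intro j
      by_cases hj : j ∈ TF
      case neg => exact ⟨(⟨0, hn1⟩, ⟨0, hn1⟩), fun h => absurd h hj⟩
      have hjS : (Sum.inr j : Fin n ⊕ Fin m) ∉ S := by simpa [hTF] using hj
      obtain ⟨q, hqP, hqsup⟩ := hcov (Sum.inr j)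
      obtain ⟨hu, hv, hpath, hlen⟩ := hP1 q hqP
      have hle : q.2.2.length ≤ 2 := by
        rw [hlen]; exact dist_le_two n m hn1 hm1 _ _
      have hju : (Sum.inr j : Fin n ⊕ Fin m) ≠ q.1 := fun h => hjS (h ▸ hu)
      have hjv : (Sum.inr j : Fin n ⊕ Fin m) ≠ q.2.1 := fun h => hjS (h ▸ hv)
      obtain ⟨hadj1, hadj2, hsup⟩ := walk_struct q.2.2 hle hqsup hju hjv
      obtain ⟨k, hk⟩ : ∃ k, q.1 = Sum.inl k := by
        rcases hq1 : q.1 with k | j0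
        · exact ⟨k, rfl⟩
        · rw [hq1] at hadj1; simp at hadj1
      obtain ⟨k', hk'⟩ : ∃ k', q.2.1 = Sum.inl k' := by
        rcases hq1 : q.2.1 with k0 | j0
        · exact ⟨k0, rfl⟩
        · rw [hq1] at hadj2; simp at hadj2
      have hne : k ≠ k' := by
        intro h
        have hnd := hpath.support_nodup
        rw [hsup] at hnd
        simp [hk, hk', h] at hnd
      rcases lt_or_gt_of_ne hne with h | h
      · exact ⟨(k, k'), fun _ => ⟨h, hk ▸ hu, hk' ▸ hv, q, hqP,
          Or.inl ⟨hk, hk', by rw [hsup]; simp [hk, hk']⟩⟩⟩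
      · exact ⟨(k', k), fun _ => ⟨h, hk' ▸ hv, hk ▸ hu, q, hqP,
          Or.inr ⟨hk, hk', by rw [hsup]; simp [hk, hk']⟩⟩⟩
    choose f hf using exG
    apply Finset.card_le_card_of_injOn f
    · intro j hj
      obtain ⟨hlt, h1, h2, -⟩ := hf j (Finset.mem_coe.mp hj)
      simp only [Finset.mem_coe, hDF, Finset.mem_filter, Finset.mem_offDiag, hAF, Finset.mem_univ, true_and]
      exact ⟨⟨h1, h2, ne_of_lt hlt⟩, hlt⟩
    · intro j hj j' hj' heq
      exact good_inj hP2 (hf j (Finset.mem_coe.mp hj))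
        (by rw [heq]; exact hf j' (Finset.mem_coe.mp hj'))
  have hsq : AF.card * AF.card ≤ 3 * AF.card :=
    Nat.mul_le_mul_right _ (le_trans hA hn3)
  rw [hScard]
  generalize hq : AF.card * AF.card = Q at hD2 hsq
  omega

theorem sg_of_small_n (n m : ℕ) (hn1 : 1 ≤ n) (hn3 : n ≤ 3) (hm : n < m) :
    strongGeodeticNumber (completeBipartiteGraph (Fin n) (Fin m)) = m := by
  have hup := strong_upper n m hn1 hm
  have hcard : (Set.range (Sum.inr : Fin m → Fin n ⊕ Fin m)).ncard = m := by
    rw [← Set.image_univ, Set.ncard_image_of_injective _ Sum.inr_injective,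
      Set.ncard_univ]
    simp
  apply le_antisymm
  · exact Nat.sInf_le ⟨_, hcard, hup⟩
  · refine le_csInf ⟨m, _, hcard, hup⟩ ?_
    rintro k ⟨S, rfl, hS⟩
    exact strong_lower n m hn1 hn3 hm S hS
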